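/- Let k be a field and let Λ ⊂ k((t^{-1}))^n be a full-rank k[t]-lattice with successive minima σ₁ ≤ … ≤ σ_n and basis matrix M. Then the determinant of Λ, defined as |det M|, equals 2^{σ₁ + … + σ_n}, and this quantity is independent of the choice of basis of Λ. -/

import Mathlib

/- Geometry of numbers over `K∞ = k((t⁻¹))`, modelled as formal Laurent series in the
variable `X = t⁻¹`.  Under this identification `ord(f) = -(f.order)`, the absolute value is
`|f| = 2^(ord f)`, and `k[t]` embeds via `t ↦ X⁻¹`, with `ord` of a polynomial equal to its
degree. -/

open scoped Classical

noncomputable section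

variable {k : Type*} [Field k]

/-- The element `t` of `K∞ = k((t⁻¹))`. -/
def tvar (k : Type*) [Field k] : LaurentSeries k := HahnSeries.single (-1 : ℤ) 1

/-- The embedding `k[t] → K∞`. -/
def polyEmb (k : Type*) [Field k] : Polynomial k →+* LaurentSeries k :=
  (Polynomial.aeval (tvar k)).toRingHom

variable {n : ℕ}

/-- The (full) `k[t]`-lattice spanned by the vectors `x 0, …, x (n-1)` in `K∞ⁿ`. -/
def lattice (x : Fin n → Fin n → LaurentSeries k) : Set (Fin n → LaurentSeries k) :=
  {v | ∃ u : Fin n → Polynomial k, v = ∑ i, polyEmb k (u i) • x i}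

/-- `k(t)`-linear independence of vectors in `K∞ⁿ`, phrased (equivalently, by clearing
denominators) via polynomial relations. -/
def PolyIndep (x : Fin n → Fin n → LaurentSeries k) : Prop :=
  ∀ u : Fin n → Polynomial k, ∑ i, polyEmb k (u i) • x i = 0 → ∀ i, u i = 0

/-- `|w| < 2^R` for a vector `w ∈ K∞ⁿ`, where `|w| = max_j 2^(ord (w j))`. -/
def NormLt (w : Fin n → LaurentSeries k) (R : ℤ) : Prop :=
  ∀ j, w j = 0 ∨ -R < (w j).order

/-- Membership of `w` in the `k(t)`-span of the vectors `x j`, `j ∈ s` (phrased by clearing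
denominators). -/
def InRatSpan (x : Fin n → Fin n → LaurentSeries k) (s : Set (Fin n))
    (w : Fin n → LaurentSeries k) : Prop :=
  ∃ q : Polynomial k, q ≠ 0 ∧ ∃ u : Fin n → Polynomial k,
    polyEmb k q • w = ∑ i, if i ∈ s then polyEmb k (u i) • x i else 0

/-- `σ 0 ≤ … ≤ σ (n-1)` are the successive minima of the lattice spanned by `x`:
there are lattice vectors `v i` with `|v i| = 2^(σ i)`, each `v i` outside the `k(t)`-span of
the previous ones, such that every lattice vector outside the span of `v 0, …, v (i-1)` has
absolute value at least `2^(σ i)`. -/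
def AreSuccessiveMinima (x : Fin n → Fin n → LaurentSeries k) (σ : Fin n → ℤ) : Prop :=
  Monotone σ ∧
  ∃ v : Fin n → Fin n → LaurentSeries k,
    (∀ i, v i ∈ lattice x) ∧
    (∀ i, ¬ InRatSpan v {j | j < i} (v i)) ∧
    (∀ i, NormLt (v i) (σ i + 1) ∧ ¬ NormLt (v i) (σ i)) ∧
    (∀ i, ∀ w ∈ lattice x, ¬ InRatSpan v {j | j < i} w → ¬ NormLt w (σ i))

namespace LatDet
open HahnSeries Polynomial Finset

open HahnSeries Polynomial Finset

/-- `Lb f e`: all coefficients of `f` below `e` vanish. -/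
def Lb (f : LaurentSeries k) (e : ℤ) : Prop := ∀ m : ℤ, m < e → f.coeff m = 0

lemma lb_zero (e : ℤ) : Lb (0 : LaurentSeries k) e := fun _ _ => rfl

lemma lb_of_order {f : LaurentSeries k} {e : ℤ} (h : f = 0 ∨ e ≤ f.order) : Lb f e := by
  rcases h with rfl | h
  · exact lb_zero e
  · exact fun m hm => coeff_eq_zero_of_lt_order (lt_of_lt_of_le hm h)

lemma order_ge_of_lb {f : LaurentSeries k} {e : ℤ} (h : Lb f e) : f = 0 ∨ e ≤ f.order := by
  rcases eq_or_ne f 0 with rfl | hf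
  · exact Or.inl rfl
  · refine Or.inr ?_
    by_contra hlt
    exact (mt coeff_order_eq_zero.mp hf) (h _ (lt_of_not_ge hlt))

lemma lb_mono {f : LaurentSeries k} {e e' : ℤ} (h : e' ≤ e) (hf : Lb f e) : Lb f e' :=
  fun m hm => hf m (lt_of_lt_of_le hm h)

lemma lb_single {a : ℤ} (r : k) : Lb (single a r) a := by
  intro m hm
  rw [coeff_single, if_neg (by omega)]

lemma lb_add {f g : LaurentSeries k} {e : ℤ} (hf : Lb f e) (hg : Lb g e) : Lb (f + g) e := by
  intro m hm; rw [HahnSeries.coeff_add, hf m hm, hg m hm, add_zero]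

lemma lb_neg {f : LaurentSeries k} {e : ℤ} (hf : Lb f e) : Lb (-f) e := by
  intro m hm; rw [HahnSeries.coeff_neg, hf m hm, neg_zero]

lemma lb_sub {f g : LaurentSeries k} {e : ℤ} (hf : Lb f e) (hg : Lb g e) : Lb (f - g) e := by
  rw [sub_eq_add_neg]; exact lb_add hf (lb_neg hg)

lemma lb_sum {ι : Type*} (s : Finset ι) (f : ι → LaurentSeries k) (e : ℤ)
    (h : ∀ i ∈ s, Lb (f i) e) : Lb (∑ i ∈ s, f i) e := by
  intro m hm
  rw [← HahnSeries.coeff.addMonoidHom_apply, map_sum]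
  exact Finset.sum_eq_zero fun i hi => h i hi m hm

lemma lb_mul_coeff {f g : LaurentSeries k} {a b : ℤ} (hf : Lb f a) (hg : Lb g b) :
    Lb (f * g) (a + b) ∧ (f * g).coeff (a + b) = f.coeff a * g.coeff b := by
  have key : ∀ c : ℤ, (f * g).coeff c =
      ∑ ij ∈ Finset.antidiagonal f.isPWO_support g.isPWO_support c,
        f.coeff ij.1 * g.coeff ij.2 := fun c => HahnSeries.coeff_mul
  constructor
  · intro m hm
    rw [key]
    refine Finset.sum_eq_zero fun ij hij => ?_
    rw [Finset.mem_addAntidiagonal] at hij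
    obtain ⟨h1, h2, h3⟩ := hij
    rcases lt_or_ge ij.1 a with h | h
    · rw [hf _ h, zero_mul]
    · rcases lt_or_ge ij.2 b with h' | h'
      · rw [hg _ h', mul_zero]
      · omega
  · rw [key]
    rw [Finset.sum_eq_single (a, b)]
    · intro ij hij hne
      rw [Finset.mem_addAntidiagonal] at hij
      obtain ⟨h1, h2, h3⟩ := hij
      have ha : a ≤ ij.1 := by
        by_contra h; push_neg at h
        exact h1 (hf _ h)
      have hb : b ≤ ij.2 := by
        by_contra h; push_neg at h
        exact h2 (hg _ h)
      exfalso
      apply hne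
      have : ij.1 = a := by omega
      have : ij.2 = b := by omega
      exact Prod.ext (by omega) (by omega)
    · intro h
      rw [Finset.mem_addAntidiagonal] at h
      push_neg at h
      by_cases h1 : f.coeff a = 0
      · rw [h1, zero_mul]
      · by_cases h2 : g.coeff b = 0
        · rw [h2, mul_zero]
        · exact absurd rfl (h h1 h2)

lemma polyEmb_C (a : k) : polyEmb k (Polynomial.C a) = HahnSeries.single 0 a := by
  show Polynomial.aeval (tvar k) (Polynomial.C a) = _
  rw [Polynomial.aeval_C]
  rw [HahnSeries.algebraMap_apply' (Γ := ℤ), ← PowerSeries.C_eq_algebraMap,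
    HahnSeries.ofPowerSeries_C, HahnSeries.C_apply]

lemma tvar_pow (i : ℕ) : tvar k ^ i = HahnSeries.single (-(i : ℤ)) 1 := by
  induction i with
  | zero => simp [HahnSeries.single_zero_one]
  | succ m ih =>
      rw [pow_succ, ih, tvar, HahnSeries.single_mul_single, one_mul]
      norm_num
      ring_nf

lemma polyEmb_CX (a : k) (e : ℕ) :
    polyEmb k (Polynomial.C a * Polynomial.X ^ e) = HahnSeries.single (-(e : ℤ)) a := by
  rw [map_mul, map_pow, polyEmb_C]
  show _ * (Polynomial.aeval (tvar k) Polynomial.X) ^ e = _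
  rw [Polynomial.aeval_X, tvar_pow, HahnSeries.single_mul_single, zero_add, mul_one]

lemma polyEmb_monomial (e : ℕ) (a : k) :
    polyEmb k (Polynomial.monomial e a) = HahnSeries.single (-(e : ℤ)) a := by
  rw [← Polynomial.C_mul_X_pow_eq_monomial, polyEmb_CX]

lemma polyEmb_coeff (p : Polynomial k) (i : ℕ) :
    (polyEmb k p).coeff (-(i : ℤ)) = p.coeff i := by
  induction p using Polynomial.induction_on' with
  | add f g hf hg => rw [map_add, HahnSeries.coeff_add, hf, hg, Polynomial.coeff_add]
  | monomial e a =>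
      rw [polyEmb_monomial, HahnSeries.coeff_single, Polynomial.coeff_monomial]
      by_cases h : e = i
      · subst h; simp
      · rw [if_neg (fun hh => h (by exact_mod_cast (neg_inj.mp hh).symm)), if_neg h]

lemma polyEmb_ne_zero {p : Polynomial k} (hp : p ≠ 0) : polyEmb k p ≠ 0 := by
  intro h
  apply Polynomial.leadingCoeff_ne_zero.mpr hp
  rw [Polynomial.leadingCoeff, ← polyEmb_coeff, h, HahnSeries.coeff_zero]

lemma polyEmb_order_nonpos {p : Polynomial k} (hp : p ≠ 0) : (polyEmb k p).order ≤ 0 := by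
  have : (polyEmb k p).coeff (-(p.natDegree : ℤ)) ≠ 0 := by
    rw [polyEmb_coeff]
    exact Polynomial.leadingCoeff_ne_zero.mpr hp
  exact le_trans (HahnSeries.order_le_of_coeff_ne_zero this) (by omega)

lemma lb_one : Lb (1 : LaurentSeries k) 0 := by
  rw [← HahnSeries.single_zero_one]; exact lb_single 1

lemma lb_prod {ι : Type*} (s : Finset ι) (f : ι → LaurentSeries k) (e : ι → ℤ)
    (h : ∀ i ∈ s, Lb (f i) (e i)) :
    Lb (∏ i ∈ s, f i) (∑ i ∈ s, e i) ∧
      (∏ i ∈ s, f i).coeff (∑ i ∈ s, e i) = ∏ i ∈ s, (f i).coeff (e i) := by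
  induction s using Finset.cons_induction with
  | empty =>
      simp only [Finset.prod_empty, Finset.sum_empty]
      exact ⟨lb_one, by rw [← HahnSeries.single_zero_one, HahnSeries.coeff_single_same]⟩
  | cons a s ha ih =>
      have hs := ih fun i hi => h i (Finset.mem_cons_of_mem hi)
      have hha := h a (Finset.mem_cons_self a s)
      rw [Finset.prod_cons, Finset.sum_cons, Finset.prod_cons]
      exact ⟨(lb_mul_coeff hha hs.1).1,
        by rw [(lb_mul_coeff hha hs.1).2, hs.2]⟩

lemma lb_zsmul {f : LaurentSeries k} {e : ℤ} (z : ℤˣ) (hf : Lb f e) : Lb (z • f) e := by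
  intro m hm
  rw [Units.smul_def]
  have : ((z : ℤ) • f).coeff m = (z : ℤ) • f.coeff m :=
    map_zsmul (HahnSeries.coeff.addMonoidHom m) _ _
  rw [this, hf m hm, smul_zero]

lemma lb_det (W : Matrix (Fin n) (Fin n) (LaurentSeries k)) (e : Fin n → ℤ)
    (h : ∀ i j, Lb (W i j) (e i)) :
    Lb W.det (∑ i, e i) ∧
      W.det.coeff (∑ i, e i) = (Matrix.of fun i j => (W i j).coeff (e i)).det := by
  have hperm : ∀ σ : Equiv.Perm (Fin n), (∑ i, e (σ i)) = ∑ i, e i :=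
    fun σ => Equiv.sum_comp σ e
  have hterm : ∀ σ : Equiv.Perm (Fin n),
      Lb (∏ i, W (σ i) i) (∑ i, e i) ∧
        (∏ i, W (σ i) i).coeff (∑ i, e i) = ∏ i, (W (σ i) i).coeff (e (σ i)) := by
    intro σ
    have := lb_prod Finset.univ (fun i => W (σ i) i) (fun i => e (σ i))
      (fun i _ => h (σ i) i)
    rw [hperm σ] at this
    exact this
  rw [Matrix.det_apply, Matrix.det_apply]
  constructor
  · exact lb_sum _ _ _ fun σ _ => lb_zsmul _ (hterm σ).1
  · rw [← HahnSeries.coeff.addMonoidHom_apply, map_sum]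
    refine Finset.sum_congr rfl fun σ _ => ?_
    rw [HahnSeries.coeff.addMonoidHom_apply, Units.smul_def, Units.smul_def]
    have hz : (((Equiv.Perm.sign σ : ℤˣ) : ℤ) • ∏ i, W (σ i) i).coeff (∑ i, e i)
        = ((Equiv.Perm.sign σ : ℤˣ) : ℤ) • ((∏ i, W (σ i) i).coeff (∑ i, e i)) :=
      map_zsmul (HahnSeries.coeff.addMonoidHom (∑ i, e i)) _ _
    rw [hz, (hterm σ).2]
    rfl

lemma smulF_apply (c : LaurentSeries k) (w : Fin n → LaurentSeries k) (j : Fin n) :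
    (c • w) j = c * w j := rfl

lemma zero_smulF (w : Fin n → LaurentSeries k) : (0 : LaurentSeries k) • w = 0 :=
  funext fun _ => zero_mul _

lemma sub_smulF (a b : LaurentSeries k) (w : Fin n → LaurentSeries k) :
    (a - b) • w = a • w - b • w :=
  funext fun _ => sub_mul _ _ _

lemma sum_coeff {ι : Type*} (s : Finset ι) (f : ι → LaurentSeries k) (m : ℤ) :
    (∑ i ∈ s, f i).coeff m = ∑ i ∈ s, (f i).coeff m := by
  rw [← HahnSeries.coeff.addMonoidHom_apply, map_sum]; rfl

/-! ### Sums of scaled vectors -/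

lemma comb_apply (c : Fin n → LaurentSeries k) (v : Fin n → Fin n → LaurentSeries k) (j : Fin n) :
    (∑ i, c i • v i) j = ∑ i, c i * v i j := by
  rw [Finset.sum_apply]
  exact Finset.sum_congr rfl fun i _ => rfl

lemma comb_eq_vecMul (c : Fin n → LaurentSeries k) (v : Fin n → Fin n → LaurentSeries k) :
    (∑ i, c i • v i) = Matrix.vecMul c (Matrix.of v) := by
  funext j
  rw [comb_apply]
  simp [Matrix.vecMul, dotProduct]

lemma indep_of_det {v : Fin n → Fin n → LaurentSeries k}
    (hdet : (Matrix.of v).det ≠ 0) {c : Fin n → LaurentSeries k}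
    (h : (∑ i, c i • v i) = 0) : c = 0 := by
  by_contra hc
  exact hdet (Matrix.exists_vecMul_eq_zero_iff.mp ⟨c, hc, by rw [← comb_eq_vecMul, h]⟩)

lemma exists_comb_of_det {v : Fin n → Fin n → LaurentSeries k}
    (hdet : (Matrix.of v).det ≠ 0) (w : Fin n → LaurentSeries k) :
    ∃ c : Fin n → LaurentSeries k, w = ∑ i, c i • v i := by
  refine ⟨Matrix.vecMul w (Matrix.of v)⁻¹, ?_⟩
  rw [comb_eq_vecMul, Matrix.vecMul_vecMul, Matrix.nonsing_inv_mul _ (by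
    exact isUnit_iff_ne_zero.mpr hdet), Matrix.vecMul_one]

/-! ### Lattice closure -/

lemma self_mem_lattice (x : Fin n → Fin n → LaurentSeries k) (i : Fin n) : x i ∈ lattice x := by
  refine ⟨fun j => if j = i then 1 else 0, ?_⟩
  rw [Finset.sum_eq_single i]
  · simp
  · intro j _ hj; simp only [if_neg hj, map_zero]; exact zero_smulF _
  · intro h; exact absurd (Finset.mem_univ i) h

lemma lattice_comb {x z : Fin n → Fin n → LaurentSeries k}
    (hz : ∀ i, z i ∈ lattice x) (u : Fin n → Polynomial k) :
    (∑ i, polyEmb k (u i) • z i) ∈ lattice x := by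
  choose B hB using hz
  refine ⟨fun j => ∑ i, u i * B i j, ?_⟩
  have : ∀ i, polyEmb k (u i) • z i = ∑ j, polyEmb k (u i * B i j) • x j := by
    intro i
    rw [hB i, Finset.smul_sum]
    exact Finset.sum_congr rfl fun j _ => by rw [map_mul, mul_smul]
  rw [Finset.sum_congr rfl fun i _ => this i, Finset.sum_comm]
  refine Finset.sum_congr rfl fun j _ => ?_
  rw [map_sum, Finset.sum_smul]

lemma lattice_sub {x : Fin n → Fin n → LaurentSeries k}
    {a b : Fin n → LaurentSeries k} (ha : a ∈ lattice x) (hb : b ∈ lattice x) :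
    a - b ∈ lattice x := by
  obtain ⟨u, hu⟩ := ha
  obtain ⟨w, hw⟩ := hb
  refine ⟨u - w, ?_⟩
  rw [hu, hw, ← Finset.sum_sub_distrib]
  exact Finset.sum_congr rfl fun i _ => by
    rw [Pi.sub_apply, map_sub]
    exact (sub_smulF _ _ _).symm

/-! ### Normal form for `InRatSpan` -/

lemma inRatSpan_iff {v : Fin n → Fin n → LaurentSeries k} {m : Fin n}
    {w : Fin n → LaurentSeries k} :
    InRatSpan v {j | j < m} w ↔ ∃ q : Polynomial k, q ≠ 0 ∧ ∃ u : Fin n → Polynomial k,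
      (∀ i, ¬ i < m → u i = 0) ∧ polyEmb k q • w = ∑ i, polyEmb k (u i) • v i := by
  constructor
  · rintro ⟨q, hq, u, hu⟩
    refine ⟨q, hq, fun i => if i < m then u i else 0, fun i hi => by simp [hi], ?_⟩
    rw [hu]
    refine Finset.sum_congr rfl fun i _ => ?_
    by_cases h : i < m
    · simp only [Set.mem_setOf_eq, if_pos h]
    · simp only [Set.mem_setOf_eq, if_neg h, map_zero]
      exact (zero_smulF _).symm
  · rintro ⟨q, hq, u, hu0, hu⟩
    refine ⟨q, hq, u, ?_⟩
    rw [hu]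
    refine Finset.sum_congr rfl fun i _ => ?_
    by_cases h : i < m
    · simp only [Set.mem_setOf_eq, if_pos h]
    · simp only [Set.mem_setOf_eq, if_neg h, hu0 i h, map_zero]
      exact zero_smulF _

/-! ### NormLt in terms of Lb -/

lemma normLt_iff {w : Fin n → LaurentSeries k} {R : ℤ} :
    NormLt w R ↔ ∀ j, Lb (w j) (1 - R) := by
  constructor
  · intro h j
    rcases h j with h0 | h0
    · rw [h0]; exact lb_zero _
    · exact lb_of_order (Or.inr (by omega))
  · intro h j
    rcases order_ge_of_lb (h j) with h0 | h0
    · exact Or.inl h0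
    · exact Or.inr (by omega)

/-! ### Splitting off the polynomial part -/

lemma exists_polyPart (c : LaurentSeries k) :
    ∃ p : Polynomial k, Lb (c - polyEmb k p) 1 := by
  set N : ℕ := (-c.order).toNat + 1 with hN
  refine ⟨∑ i ∈ Finset.range N, Polynomial.C (c.coeff (-(i : ℤ))) * Polynomial.X ^ i, ?_⟩
  intro m hm
  have hm0 : m ≤ 0 := by omega
  rw [HahnSeries.coeff_sub, map_sum, sum_coeff]
  have hterm : ∀ i ∈ Finset.range N,
      (polyEmb k (Polynomial.C (c.coeff (-(i : ℤ))) * Polynomial.X ^ i)).coeff m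
        = if m = -(i : ℤ) then c.coeff m else 0 := by
    intro i _
    rw [polyEmb_CX, HahnSeries.coeff_single]
    by_cases h : m = -(i : ℤ)
    · rw [if_pos h, if_pos h, h]
    · rw [if_neg h, if_neg h]
  rw [Finset.sum_congr rfl hterm]
  by_cases hc : (-m).toNat < N
  · rw [Finset.sum_eq_single (-m).toNat]
    · rw [if_pos (by omega), sub_self]
    · intro i _ hi
      rw [if_neg (by omega)]
    · intro h; exact absurd (Finset.mem_range.mpr hc) h
  · rw [Finset.sum_eq_zero]
    · have hord : m < c.order := by
        have h1 : (0:ℤ) ≤ (-c.order).toNat + 1 + c.order := by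
          have := Int.self_le_toNat (-c.order); omega
        omega
      rw [HahnSeries.coeff_eq_zero_of_lt_order hord, sub_zero]
    · intro i hi
      rw [Finset.mem_range] at hi
      rw [if_neg (by omega)]

/-! ### further small helpers -/

lemma smul_smulF (a b : LaurentSeries k) (w : Fin n → LaurentSeries k) :
    a • b • w = (a * b) • w := by
  funext j
  show a * (b * w j) = (a * b) * w j
  rw [mul_assoc]

lemma neg_smulF (a : LaurentSeries k) (w : Fin n → LaurentSeries k) :
    (-a) • w = -(a • w) := by
  funext j
  exact neg_mul a (w j)

lemma smulF_sum {ι : Type*} (s : Finset ι) (c : LaurentSeries k)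
    (f : ι → Fin n → LaurentSeries k) :
    c • (∑ i ∈ s, f i) = ∑ i ∈ s, c • f i := by
  funext j
  rw [smulF_apply, Finset.sum_apply, Finset.sum_apply, Finset.mul_sum]
  exact Finset.sum_congr rfl fun i _ => (smulF_apply _ _ _).symm

lemma lb_succ {f : LaurentSeries k} {e : ℤ} (hf : Lb f e) (h0 : f.coeff e = 0) :
    Lb f (e + 1) := by
  intro m hm
  rcases lt_or_eq_of_le (show m ≤ e by omega) with h | h
  · exact hf m h
  · rw [h]; exact h0

lemma smul_comb (q : LaurentSeries k) (c : Fin n → LaurentSeries k)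
    (v : Fin n → Fin n → LaurentSeries k) :
    q • (∑ i, c i • v i) = ∑ i, (q * c i) • v i := by
  rw [smulF_sum]
  exact Finset.sum_congr rfl fun i _ => smul_smulF _ _ _

/-! ### The core section -/

section core

variable (v : Fin n → Fin n → LaurentSeries k) (σ : Fin n → ℤ)

/-- Residue matrix of the minima vectors. -/
def res : Fin n → Fin n → k := fun i j => (v i j).coeff (-(σ i))

lemma lb_v {v : Fin n → Fin n → LaurentSeries k} {σ : Fin n → ℤ}
    (hnorm1 : ∀ i, NormLt (v i) (σ i + 1)) (i j : Fin n) : Lb (v i j) (-(σ i)) := by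
  have := normLt_iff.mp (hnorm1 i) j
  exact lb_mono (by omega) this

variable {x : Fin n → Fin n → LaurentSeries k} {v} {σ}

lemma res_indep
    (hmono : Monotone σ)
    (hvlat : ∀ i, v i ∈ lattice x)
    (hvind : ∀ i, ¬ InRatSpan v {j | j < i} (v i))
    (hnorm1 : ∀ i, NormLt (v i) (σ i + 1))
    (hmin : ∀ i, ∀ w ∈ lattice x, ¬ InRatSpan v {j | j < i} w → ¬ NormLt w (σ i))
    (c : Fin n → k) (hc : ∀ j, ∑ i, c i * res v σ i j = 0) : c = 0 := by
  by_contra hc0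
  have hc0' : c ≠ 0 := hc0
  have hs : (Finset.univ.filter fun i => c i ≠ 0).Nonempty := by
    rw [Function.ne_iff] at hc0'
    obtain ⟨i, hi⟩ := hc0'
    exact ⟨i, by simpa using hi⟩
  set m := (Finset.univ.filter fun i => c i ≠ 0).max' hs with hm
  have hcm : c m ≠ 0 := by
    have := Finset.max'_mem _ hs
    rw [← hm] at this
    simpa using this
  have hcgt : ∀ i, m < i → c i = 0 := by
    intro i hi
    by_contra h
    exact absurd (Finset.le_max' _ i (by simp [h])) (not_le.mpr hi)
  set u : Fin n → Polynomial k := fun i =>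
    if i ≤ m then Polynomial.C (c i) * Polynomial.X ^ ((σ m - σ i).toNat) else 0 with hudef
  set w : Fin n → LaurentSeries k := ∑ i, polyEmb k (u i) • v i with hwdef
  have hwl : w ∈ lattice x := lattice_comb hvlat u
  have hemb : ∀ i, i ≤ m → polyEmb k (u i) = HahnSeries.single (σ i - σ m) (c i) := by
    intro i hi
    have hσ : σ i ≤ σ m := hmono hi
    have : u i = Polynomial.C (c i) * Polynomial.X ^ ((σ m - σ i).toNat) := by
      rw [hudef]; simp [hi]
    have hexp : (-(((σ m - σ i).toNat : ℕ) : ℤ)) = σ i - σ m := by omega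
    rw [this, polyEmb_CX, hexp]
  have humzero : ∀ i, ¬ i ≤ m → u i = 0 := by
    intro i hi
    rw [hudef]; simp [hi]
  -- component bounds
  have hterm : ∀ i j, Lb (polyEmb k (u i) * v i j) (-(σ m)) ∧
      (polyEmb k (u i) * v i j).coeff (-(σ m)) = c i * res v σ i j := by
    intro i j
    by_cases hi : i ≤ m
    · rw [hemb i hi]
      have h := lb_mul_coeff (lb_single (a := σ i - σ m) (c i)) (lb_v hnorm1 i j)
      rw [show σ i - σ m + -(σ i) = -(σ m) by ring] at h
      refine ⟨h.1, ?_⟩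
      rw [h.2, HahnSeries.coeff_single_same]
      rfl
    · rw [humzero i hi, map_zero, zero_mul]
      refine ⟨lb_zero _, ?_⟩
      rw [HahnSeries.coeff_zero, hcgt i (not_le.mp hi), zero_mul]
  have hlbw : ∀ j, Lb (w j) (1 - σ m) := by
    intro j
    have h1 : Lb (w j) (-(σ m)) := by
      rw [hwdef, comb_apply]
      exact lb_sum _ _ _ fun i _ => (hterm i j).1
    have h2 : (w j).coeff (-(σ m)) = 0 := by
      rw [hwdef, comb_apply, sum_coeff, Finset.sum_congr rfl fun i _ => (hterm i j).2, hc j]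
    exact lb_mono (by omega) (lb_succ h1 h2)
  have hnw : NormLt w (σ m) := normLt_iff.mpr hlbw
  have hir : InRatSpan v {j | j < m} w := by
    by_contra h
    exact hmin m w hwl h hnw
  obtain ⟨q, hq, g, hg0, heq⟩ := inRatSpan_iff.mp hir
  -- difference of the two representations
  set d : Fin n → Polynomial k := fun i => g i - q * u i with hddef
  have hd : ∑ i, polyEmb k (d i) • v i = 0 := by
    have hl : polyEmb k q • w = ∑ i, polyEmb k (q * u i) • v i := by
      rw [hwdef, smul_comb]
      exact Finset.sum_congr rfl fun i _ => by rw [map_mul]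
    have := heq.symm.trans hl
    calc ∑ i, polyEmb k (d i) • v i
        = ∑ i, (polyEmb k (g i) • v i - polyEmb k (q * u i) • v i) := by
          refine Finset.sum_congr rfl fun i _ => ?_
          rw [hddef, map_sub]
          exact sub_smulF _ _ _
      _ = ∑ i, polyEmb k (g i) • v i - ∑ i, polyEmb k (q * u i) • v i :=
          Finset.sum_sub_distrib ..
      _ = 0 := by rw [← this, sub_self]
  have hdm : d m ≠ 0 := by
    have hgm : g m = 0 := hg0 m (lt_irrefl m)
    have hum : u m ≠ 0 := by
      have : u m = Polynomial.C (c m) * Polynomial.X ^ ((σ m - σ m).toNat) := by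
        rw [hudef]; simp
      rw [this]
      exact mul_ne_zero (by simpa using hcm) (pow_ne_zero _ Polynomial.X_ne_zero)
    rw [hddef]
    simp only [hgm, zero_sub, neg_ne_zero]
    exact mul_ne_zero hq hum
  -- build a rational-span representation of `v m`
  set e : Fin n → Polynomial k := fun i => if i = m then 0 else d i with hedef
  have hsplit : ∀ i, polyEmb k (d i) • v i
      = polyEmb k (e i) • v i + (if i = m then polyEmb k (d m) • v m else 0) := by
    intro i
    by_cases h : i = m
    · have he : e i = 0 := by rw [hedef, h]; simp
      rw [he, map_zero, zero_smulF, zero_add, if_pos h, h]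
    · have he : e i = d i := by rw [hedef]; simp [h]
      rw [he, if_neg h, add_zero]
  have hkey : polyEmb k (-(d m)) • v m = ∑ i, polyEmb k (e i) • v i := by
    have h1 : (0 : Fin n → LaurentSeries k)
        = ∑ i, polyEmb k (e i) • v i + polyEmb k (d m) • v m := by
      rw [← hd, Finset.sum_congr rfl fun i _ => hsplit i, Finset.sum_add_distrib,
        Finset.sum_ite_eq' Finset.univ m (fun _ => polyEmb k (d m) • v m),
        if_pos (Finset.mem_univ m)]
    rw [map_neg, neg_smulF]
    exact (eq_neg_of_add_eq_zero_left h1.symm).symm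
  have : InRatSpan v {j | j < m} (v m) := by
    rw [inRatSpan_iff]
    refine ⟨-(d m), neg_ne_zero.mpr hdm, e, ?_, hkey⟩
    intro i hi
    by_cases h : i = m
    · rw [hedef]; simp [h]
    · have him : m < i := by
        rcases lt_trichotomy i m with h1 | h1 | h1
        · exact absurd h1 hi
        · exact absurd h1 h
        · exact h1
      rw [hedef]
      simp only [if_neg h, hddef]
      rw [hg0 i hi, humzero i (not_le.mpr him), mul_zero, sub_zero]
  exact hvind m this

lemma det_res_ne
    (hmono : Monotone σ)
    (hvlat : ∀ i, v i ∈ lattice x)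
    (hvind : ∀ i, ¬ InRatSpan v {j | j < i} (v i))
    (hnorm1 : ∀ i, NormLt (v i) (σ i + 1))
    (hmin : ∀ i, ∀ w ∈ lattice x, ¬ InRatSpan v {j | j < i} w → ¬ NormLt w (σ i)) :
    (Matrix.of (res v σ)).det ≠ 0 := by
  intro h0
  obtain ⟨c, hcne, hcv⟩ := Matrix.exists_vecMul_eq_zero_iff.mpr h0
  apply hcne
  apply res_indep hmono hvlat hvind hnorm1 hmin c
  intro j
  have := congrFun hcv j
  simpa [Matrix.vecMul, dotProduct] using this

lemma single_prod (s : Finset (Fin n)) (σ : Fin n → ℤ) :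
    (∏ i ∈ s, (HahnSeries.single (σ i) (1:k) : LaurentSeries k))
      = HahnSeries.single (∑ i ∈ s, σ i) 1 := by
  induction s using Finset.cons_induction with
  | empty => simp [HahnSeries.single_zero_one]
  | cons a s ha ih =>
      rw [Finset.prod_cons, Finset.sum_cons, ih, HahnSeries.single_mul_single, one_mul]

lemma det_v
    (hmono : Monotone σ)
    (hvlat : ∀ i, v i ∈ lattice x)
    (hvind : ∀ i, ¬ InRatSpan v {j | j < i} (v i))
    (hnorm1 : ∀ i, NormLt (v i) (σ i + 1))
    (hmin : ∀ i, ∀ w ∈ lattice x, ¬ InRatSpan v {j | j < i} w → ¬ NormLt w (σ i)) :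
    (Matrix.of v).det ≠ 0 ∧ ((Matrix.of v).det).order = -(∑ i, σ i) := by
  set W : Matrix (Fin n) (Fin n) (LaurentSeries k) :=
    Matrix.of fun i j => HahnSeries.single (σ i) (1:k) * v i j with hW
  have hlb : ∀ i j, Lb (W i j) 0 ∧ (W i j).coeff 0 = res v σ i j := by
    intro i j
    have h := lb_mul_coeff (lb_single (a := σ i) (1:k)) (lb_v hnorm1 i j)
    rw [show σ i + -(σ i) = 0 by ring] at h
    have hWij : W i j = HahnSeries.single (σ i) (1:k) * v i j := rfl
    rw [hWij]
    exact ⟨h.1, by rw [h.2, HahnSeries.coeff_single_same, one_mul]; rfl⟩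
  have hdet := lb_det W (fun _ => (0:ℤ)) (fun i j => (hlb i j).1)
  rw [Finset.sum_const, smul_zero] at hdet
  have hres : (Matrix.of fun i j => (W i j).coeff 0).det = (Matrix.of (res v σ)).det := by
    congr 1
    funext i j
    exact (hlb i j).2
  have hc0 : W.det.coeff 0 ≠ 0 := by
    rw [hdet.2, hres]
    exact det_res_ne hmono hvlat hvind hnorm1 hmin
  have hWne : W.det ≠ 0 := fun h => hc0 (by rw [h, HahnSeries.coeff_zero])
  have hord : W.det.order = 0 :=
    le_antisymm (HahnSeries.order_le_of_coeff_ne_zero hc0)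
      ((order_ge_of_lb hdet.1).resolve_left hWne)
  have hfac : W = Matrix.diagonal (fun i => (HahnSeries.single (σ i) (1:k) : LaurentSeries k))
      * Matrix.of v := by
    ext i j
    rw [Matrix.diagonal_mul]
    rfl
  have hWdet : W.det = HahnSeries.single (∑ i, σ i) (1:k) * (Matrix.of v).det := by
    rw [hfac, Matrix.det_mul, Matrix.det_diagonal, single_prod]
  have hvne : (Matrix.of v).det ≠ 0 := by
    intro h
    rw [h, mul_zero] at hWdet
    exact hWne hWdet
  refine ⟨hvne, ?_⟩
  have horder := congrArg HahnSeries.order hWdet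
  rw [hord, HahnSeries.order_mul (HahnSeries.single_ne_zero one_ne_zero) hvne,
    HahnSeries.order_single one_ne_zero] at horder
  omega

lemma span_v
    (hmono : Monotone σ)
    (hvlat : ∀ i, v i ∈ lattice x)
    (hvind : ∀ i, ¬ InRatSpan v {j | j < i} (v i))
    (hnorm1 : ∀ i, NormLt (v i) (σ i + 1))
    (hmin : ∀ i, ∀ w ∈ lattice x, ¬ InRatSpan v {j | j < i} w → ¬ NormLt w (σ i)) :
    ∀ w ∈ lattice x, ∃ p : Fin n → Polynomial k, w = ∑ i, polyEmb k (p i) • v i := by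
  have hdv := (det_v hmono hvlat hvind hnorm1 hmin).1
  intro w hw
  obtain ⟨c, hc⟩ := exists_comb_of_det hdv w
  choose p hp using fun i => exists_polyPart (c i)
  set e : Fin n → LaurentSeries k := fun i => c i - polyEmb k (p i) with hedef
  by_cases he : ∀ i, e i = 0
  · refine ⟨p, ?_⟩
    rw [hc]
    refine Finset.sum_congr rfl fun i _ => ?_
    have h1 : c i = polyEmb k (p i) := by
      have h2 := he i
      rw [hedef] at h2
      exact sub_eq_zero.mp h2
    rw [h1]
  · push_neg at he
    exfalso
    have hs : (Finset.univ.filter fun i => e i ≠ 0).Nonempty := by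
      obtain ⟨i, hi⟩ := he
      exact ⟨i, Finset.mem_filter.mpr ⟨Finset.mem_univ i, hi⟩⟩
    set m := (Finset.univ.filter fun i => e i ≠ 0).max' hs with hm
    have hem : e m ≠ 0 := by
      have h1 := Finset.max'_mem _ hs
      rw [← hm] at h1
      exact (Finset.mem_filter.mp h1).2
    have hgt : ∀ i, m < i → e i = 0 := by
      intro i hi
      by_contra h
      exact absurd (Finset.le_max' _ i (Finset.mem_filter.mpr ⟨Finset.mem_univ i, h⟩))
        (not_le.mpr hi)
    set w' : Fin n → LaurentSeries k := w - ∑ i, polyEmb k (p i) • v i with hw'def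
    have hw'l : w' ∈ lattice x := lattice_sub hw (lattice_comb hvlat p)
    have hw'c : w' = ∑ i, e i • v i := by
      rw [hw'def, hc, ← Finset.sum_sub_distrib]
      refine Finset.sum_congr rfl fun i _ => ?_
      rw [hedef]
      exact (sub_smulF _ _ _).symm
    have hlbe : ∀ i, Lb (e i) 1 := by
      intro i
      rw [hedef]
      exact hp i
    have hnw' : NormLt w' (σ m) := by
      rw [normLt_iff]
      intro j
      rw [hw'c, comb_apply]
      apply lb_sum
      intro i _
      by_cases hi : i ≤ m
      · have h := lb_mul_coeff (hlbe i) (lb_v hnorm1 i j)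
        exact lb_mono (by have := hmono hi; omega) h.1
      · rw [hgt i (not_le.mp hi), zero_mul]
        exact lb_zero _
    have hir : InRatSpan v {j | j < m} w' := by
      by_contra h
      exact hmin m w' hw'l h hnw'
    obtain ⟨q, hq, g, hg0, heq⟩ := inRatSpan_iff.mp hir
    have hzero : ∑ i, (polyEmb k q * e i - polyEmb k (g i)) • v i = 0 := by
      have hl : polyEmb k q • w' = ∑ i, (polyEmb k q * e i) • v i := by
        rw [hw'c, smul_comb]
      calc ∑ i, (polyEmb k q * e i - polyEmb k (g i)) • v i
          = ∑ i, ((polyEmb k q * e i) • v i - polyEmb k (g i) • v i) :=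
            Finset.sum_congr rfl fun i _ => sub_smulF _ _ _
        _ = ∑ i, (polyEmb k q * e i) • v i - ∑ i, polyEmb k (g i) • v i :=
            Finset.sum_sub_distrib ..
        _ = 0 := by rw [← hl, heq, sub_self]
    have hcoef := indep_of_det hdv hzero
    have hcm := congrFun hcoef m
    rw [hg0 m (lt_irrefl m), map_zero, sub_zero] at hcm
    rcases mul_eq_zero.mp hcm with h | h
    · exact polyEmb_ne_zero hq h
    · exact hem h

end core

end LatDet

/-- **Determinant of a lattice (Mahler; equation (A.2)).**  For any basis `y` of the lattice
spanned by `x` (with successive minima `σ`), the determinant of the basis matrix is nonzero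
and `|det M| = 2^(σ 0 + ⋯ + σ (n-1))`, i.e. `(det M).order = -(∑ i, σ i)`; in particular this
quantity does not depend on the choice of basis. -/
theorem lattice_det (x : Fin n → Fin n → LaurentSeries k) (σ : Fin n → ℤ)
    (hx : PolyIndep x) (hσ : AreSuccessiveMinima x σ) :
    ∀ y : Fin n → Fin n → LaurentSeries k, PolyIndep y → lattice y = lattice x →
      (Matrix.of y).det ≠ 0 ∧ ((Matrix.of y).det).order = -(∑ i, σ i) := by
  obtain ⟨hmono, v, hvlat, hvind, hnorm, hmin⟩ := hσ
  have hnorm1 : ∀ i, NormLt (v i) (σ i + 1) := fun i => (hnorm i).1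
  have hdv := LatDet.det_v hmono hvlat hvind hnorm1 hmin
  intro y _hy hyx
  have hvy : ∀ i, v i ∈ lattice y := fun i => by rw [hyx]; exact hvlat i
  choose A hA using hvy
  have hfac1 : (Matrix.of v).det = polyEmb k (Matrix.of A).det * (Matrix.of y).det := by
    have hmat : Matrix.of v = ((polyEmb k).mapMatrix (Matrix.of A)) * Matrix.of y := by
      apply Matrix.ext
      intro i j
      rw [Matrix.mul_apply]
      have h := congrFun (hA i) j
      rw [LatDet.comb_apply] at h
      simpa [Matrix.map_apply, RingHom.mapMatrix_apply] using h
    rw [hmat, Matrix.det_mul, ← RingHom.map_det]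
  have hdy : (Matrix.of y).det ≠ 0 := fun h => hdv.1 (by rw [hfac1, h, mul_zero])
  have hAd : (Matrix.of A).det ≠ 0 := fun h => hdv.1 (by rw [hfac1, h, map_zero, zero_mul])
  have hyL : ∀ i, y i ∈ lattice x := fun i => by
    rw [← hyx]; exact LatDet.self_mem_lattice y i
  choose B hB using fun i => LatDet.span_v hmono hvlat hvind hnorm1 hmin (y i) (hyL i)
  have hfac2 : (Matrix.of y).det = polyEmb k (Matrix.of B).det * (Matrix.of v).det := by
    have hmat : Matrix.of y = ((polyEmb k).mapMatrix (Matrix.of B)) * Matrix.of v := by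
      apply Matrix.ext
      intro i j
      rw [Matrix.mul_apply]
      have h := congrFun (hB i) j
      rw [LatDet.comb_apply] at h
      simpa [Matrix.map_apply, RingHom.mapMatrix_apply] using h
    rw [hmat, Matrix.det_mul, ← RingHom.map_det]
  have hBd : (Matrix.of B).det ≠ 0 := fun h => hdy (by rw [hfac2, h, map_zero, zero_mul])
  refine ⟨hdy, ?_⟩
  have h1 := congrArg HahnSeries.order hfac1
  rw [HahnSeries.order_mul (LatDet.polyEmb_ne_zero hAd) hdy, hdv.2] at h1
  have h2 := congrArg HahnSeries.order hfac2
  rw [HahnSeries.order_mul (LatDet.polyEmb_ne_zero hBd) hdv.1, hdv.2] at h2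
  have ha := LatDet.polyEmb_order_nonpos hAd
  have hb := LatDet.polyEmb_order_nonpos hBd
  omega

end
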